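/- Let T be a leaf-ordered rooted binary tree on n leaves, and let e be an internal edge of T whose endpoints have canonical labels −k (the upper endpoint, closer to the root) and −j (the lower endpoint). If T′ is obtained from T by an NNI move across e such that in T′ the modified edge still has the node with canonical label −k as its upper endpoint, then the OLA encodings of T and T′ differ only in the entry a_j; in particular d_OLA(T, T′) = 1. -/

import Mathlib

/-- A rooted binary tree whose leaves carry natural-number labels. -/
inductive BTree : Type
  | leaf : ℕ → BTree
  | node : BTree → BTree → BTree
  deriving DecidableEq

namespace BTree

/-- The minimum leaf label in a tree (the "clade-founder" label of its root). -/
def minLeaf : BTree → ℕ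
  | leaf j => j
  | node l r => min (minLeaf l) (minLeaf r)

/-- The label of the root node of a subtree: a leaf carries its own label,
and an internal node carries its canonical label `-CS`, where `CS` is the
"clade-splitter" label, i.e. the maximum of the children's clade-founder labels. -/
def nodeLabel : BTree → ℤ
  | leaf j => (j : ℤ)
  | node l r => -(max (minLeaf l) (minLeaf r) : ℤ)

/-- The multiset of leaf labels of a tree. -/
def leafMultiset : BTree → Multiset ℕ
  | leaf j => {j}
  | node l r => leafMultiset l + leafMultiset r

/-- Canonical form for representing an *unordered* tree by an ordered one:
at each internal node the left subtree contains the smaller minimum leaf label. -/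
def Canonical : BTree → Prop
  | leaf _ => True
  | node l r => minLeaf l < minLeaf r ∧ Canonical l ∧ Canonical r

/-- `IsRBT n T` : `T` is (the canonical representative of) a leaf-ordered rooted
binary tree on `n` leaves, bijectively labeled `0, 1, ..., n-1`. -/
def IsRBT (n : ℕ) (T : BTree) : Prop :=
  Canonical T ∧ leafMultiset T = Multiset.range n

/-- Number of leaves. -/
def numLeaves : BTree → ℕ
  | leaf _ => 1
  | node l r => numLeaves l + numLeaves r

/-- Delete the leaf labeled `i` (together with its parent); return the label of
its sister node together with the remaining tree. -/
def deleteLeaf (i : ℕ) : BTree → Option (ℤ × BTree)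
  | leaf _ => none
  | node l r =>
    if l = leaf i then some (nodeLabel r, r)
    else if r = leaf i then some (nodeLabel l, l)
    else
      match deleteLeaf i l with
      | some (a, l') => some (a, node l' r)
      | none =>
        match deleteLeaf i r with
        | some (a, r') => some (a, node l r')
        | none => none

/-- Deconstruct a tree by removing leaves `m, m-1, ..., 1` in reverse order,
recording the (leaf or canonical internal) label of the sister of each removed leaf. -/
def olaEncodeAux : ℕ → BTree → List ℤ
  | 0, _ => []
  | m + 1, T =>
    match deleteLeaf (m + 1) T with
    | some (a, T') => olaEncodeAux m T' ++ [a]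
    | none => []

/-- The OLA (ordered leaf attachment) encoding `(a_1, ..., a_{n-1})` of a tree on
`n` leaves: `a_i` is the label of the node that is the sister of leaf `i` at the
step when leaf `i` is attached. -/
def olaEncode (T : BTree) : List ℤ := olaEncodeAux (numLeaves T - 1) T

/-- Attach a new leaf labeled `i` as the sister of the node whose label is `a`
(subdividing that node's parent edge). -/
def attachAt (a : ℤ) (i : ℕ) : BTree → BTree
  | leaf j => if (j : ℤ) = a then node (leaf j) (leaf i) else leaf j
  | node l r =>
    if nodeLabel (node l r) = a then node (node l r) (leaf i)
    else node (attachAt a i l) (attachAt a i r)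

/-- Helper for OLA decoding: attach leaves `i, i+1, ...` at the recorded labels. -/
def olaDecodeAux : BTree → ℕ → List ℤ → BTree
  | T, _, [] => T
  | T, i, a :: rest => olaDecodeAux (attachAt a i T) (i + 1) rest

/-- The OLA decoding: starting from the single leaf `0`, attach leaf `i` as the
sister of the node labeled `a_i`, for `i = 1, ..., n-1`. -/
def olaDecode (v : List ℤ) : BTree := olaDecodeAux (leaf 0) 1 v

end BTree

/-- `ValidCode v` : membership of `v = (a_1, ..., a_m)` in `C_m`, i.e. the entry
`a_i` (at list index `i - 1`) satisfies `-i < a_i < i`. -/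
def ValidCode (v : List ℤ) : Prop :=
  ∀ i : Fin v.length, -((i : ℤ) + 1) < v.get i ∧ v.get i < (i : ℤ) + 1

/-- The OLA distance: the Hamming distance between the OLA encodings. -/
def olaDist (T T' : BTree) : ℕ :=
  ((BTree.olaEncode T).zip (BTree.olaEncode T')).countP fun p => decide (p.1 ≠ p.2)

/-- One-hole contexts, marking the position of a subtree/edge in a tree. -/
inductive Ctx : Type
  | hole : Ctx
  | left : Ctx → BTree → Ctx
  | right : BTree → Ctx → Ctx
  deriving DecidableEq

/-- Fill the hole of a context with a tree. -/
def Ctx.fill : Ctx → BTree → BTree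
  | .hole, T => T
  | .left c r, T => BTree.node (Ctx.fill c T) r
  | .right l c, T => BTree.node l (Ctx.fill c T)

/-- Composition of contexts: `(c.comp d).fill X = c.fill (d.fill X)`. -/
def Ctx.comp : Ctx → Ctx → Ctx
  | .hole, d => d
  | .left c r, d => .left (Ctx.comp c d) r
  | .right l c, d => .right l (Ctx.comp c d)

/-- Equality of ordered binary trees as *unordered* trees (children may be swapped
at every internal node). -/
def TreeEquiv : BTree → BTree → Prop
  | .leaf i, .leaf j => i = j
  | .node l r, .node l' r' =>
      (TreeEquiv l l' ∧ TreeEquiv r r') ∨ (TreeEquiv l r' ∧ TreeEquiv r l')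
  | _, _ => False

/-- `T'` is obtained from `T` by a single NNI move: contract an internal edge
(the edge above the subtree `node A B`) and re-resolve the resulting degree-4
node in one of the two other possible ways (unordered). -/
def IsNNIMove (T T' : BTree) : Prop :=
  ∃ (c : Ctx) (A B C : BTree),
    TreeEquiv T (Ctx.fill c (BTree.node (BTree.node A B) C)) ∧
    TreeEquiv T' (Ctx.fill c (BTree.node (BTree.node A C) B))

/-- `T'` is obtained from `T` by a single rooted SPR move: prune the subtree `S`
(suppressing the resulting degree-2 node) and regraft it by subdividing an edge
of the remaining tree. -/
def IsSPRMove (T T' : BTree) : Prop :=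
  ∃ (S : BTree) (c c' : Ctx) (X Y : BTree),
    TreeEquiv T (Ctx.fill c (BTree.node S X)) ∧
    Ctx.fill c X = Ctx.fill c' Y ∧
    TreeEquiv T' (Ctx.fill c' (BTree.node S Y))

/-- The multiset of canonical labels of the internal nodes of a tree. -/
def internalLabels : BTree → Multiset ℤ
  | .leaf _ => 0
  | .node l r => BTree.nodeLabel (BTree.node l r) ::ₘ (internalLabels l + internalLabels r)

/-- `prune k T` : delete all leaves with label `≥ k` and suppress the resulting
degree-2 nodes (`none` if no leaf survives). -/
def prune (k : ℕ) : BTree → Option BTree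
  | .leaf j => if j < k then some (.leaf j) else none
  | .node l r =>
    match prune k l, prune k r with
    | some l', some r' => some (.node l' r')
    | some l', none => some l'
    | none, some r' => some r'
    | none, none => none

namespace OLAProof
open BTree Ctx

/-! ### Basic facts about leafMultiset, minLeaf, nodeLabel -/

lemma leafMultiset_ne_zero (T : BTree) : leafMultiset T ≠ 0 := by
  induction T with
  | leaf j => simp [leafMultiset]
  | node l r ihl ihr =>
    simp only [leafMultiset, ne_eq, add_eq_zero, not_and]
    intro h; exact absurd h ihl

lemma card_leafMultiset (T : BTree) : Multiset.card (leafMultiset T) = numLeaves T := by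
  induction T with
  | leaf j => simp [leafMultiset, numLeaves]
  | node l r ihl ihr => simp [leafMultiset, numLeaves, ihl, ihr]

lemma minLeaf_mem (T : BTree) : minLeaf T ∈ leafMultiset T := by
  induction T with
  | leaf j => simp [leafMultiset, minLeaf]
  | node l r ihl ihr =>
    simp only [leafMultiset, minLeaf, Multiset.mem_add]
    rcases min_cases (minLeaf l) (minLeaf r) with ⟨h, _⟩ | ⟨h, _⟩
    · exact Or.inl (by rw [h]; exact ihl)
    · exact Or.inr (by rw [h]; exact ihr)

lemma minLeaf_le (T : BTree) {x : ℕ} (hx : x ∈ leafMultiset T) : minLeaf T ≤ x := by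
  induction T with
  | leaf j => simp_all [leafMultiset, minLeaf]
  | node l r ihl ihr =>
    simp only [leafMultiset, Multiset.mem_add] at hx
    simp only [minLeaf]
    rcases hx with hx | hx
    · exact le_trans (min_le_left _ _) (ihl hx)
    · exact le_trans (min_le_right _ _) (ihr hx)

lemma natAbs_nodeLabel_mem (T : BTree) : (nodeLabel T).natAbs ∈ leafMultiset T := by
  cases T with
  | leaf j => simp [nodeLabel, leafMultiset]
  | node l r =>
    show (-(max (minLeaf l) (minLeaf r) : ℤ)).natAbs ∈ leafMultiset l + leafMultiset r
    rw [Int.natAbs_neg, ← Nat.cast_max, Int.natAbs_natCast, Multiset.mem_add]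
    rcases max_cases (minLeaf l) (minLeaf r) with ⟨h, _⟩ | ⟨h, _⟩
    · exact Or.inl (by rw [h]; exact minLeaf_mem l)
    · exact Or.inr (by rw [h]; exact minLeaf_mem r)

lemma minLeaf_eq_of_leafMultiset_eq {X Y : BTree} (h : leafMultiset X = leafMultiset Y) :
    minLeaf X = minLeaf Y :=
  le_antisymm (minLeaf_le X (h ▸ minLeaf_mem Y)) (minLeaf_le Y (h.symm ▸ minLeaf_mem X))

lemma ne_leaf_of_not_mem {i : ℕ} {X : BTree} (h : i ∉ leafMultiset X) : X ≠ leaf i := by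
  rintro rfl; simp [leafMultiset] at h

/-! ### deleteLeaf basics -/

lemma deleteLeaf_node (i : ℕ) (l r : BTree) :
    deleteLeaf i (node l r) =
      if l = leaf i then some (nodeLabel r, r)
      else if r = leaf i then some (nodeLabel l, l)
      else
        match deleteLeaf i l with
        | some (a, l') => some (a, node l' r)
        | none =>
          match deleteLeaf i r with
          | some (a, r') => some (a, node l r')
          | none => none := rfl

lemma deleteLeaf_eq_none {i : ℕ} {T : BTree} (h : i ∉ leafMultiset T) :
    deleteLeaf i T = none := by
  induction T with
  | leaf j => rfl
  | node l r ihl ihr =>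
    simp only [leafMultiset, Multiset.mem_add, not_or] at h
    rw [deleteLeaf_node, if_neg (ne_leaf_of_not_mem h.1), if_neg (ne_leaf_of_not_mem h.2),
      ihl h.1, ihr h.2]

lemma deleteLeaf_isSome {i : ℕ} {T : BTree} (h : i ∈ leafMultiset T) (hT : T ≠ leaf i) :
    ∃ a T', deleteLeaf i T = some (a, T') := by
  induction T with
  | leaf j =>
    simp only [leafMultiset, Multiset.mem_singleton] at h
    exact absurd (by rw [h]) hT
  | node l r ihl ihr =>
    rw [deleteLeaf_node]
    by_cases hl : l = leaf i
    · exact ⟨_, _, by rw [if_pos hl]⟩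
    by_cases hr : r = leaf i
    · exact ⟨_, _, by rw [if_neg hl, if_pos hr]⟩
    rw [if_neg hl, if_neg hr]
    simp only [leafMultiset, Multiset.mem_add] at h
    by_cases hml : i ∈ leafMultiset l
    · obtain ⟨a, l', hdl⟩ := ihl hml hl
      exact ⟨a, node l' r, by rw [hdl]⟩
    · rw [deleteLeaf_eq_none hml]
      obtain ⟨a, r', hdr⟩ := ihr (h.resolve_left hml) hr
      exact ⟨a, node l r', by rw [hdr]⟩

lemma deleteLeaf_leafMultiset {i : ℕ} {T T' : BTree} {a : ℤ}
    (h : deleteLeaf i T = some (a, T')) : i ::ₘ leafMultiset T' = leafMultiset T := by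
  induction T generalizing T' a with
  | leaf j => simp [deleteLeaf] at h
  | node l r ihl ihr =>
    rw [deleteLeaf_node] at h
    by_cases hl : l = leaf i
    · rw [if_pos hl] at h
      obtain ⟨rfl, rfl⟩ : a = nodeLabel r ∧ T' = r := by simpa using h.symm
      subst hl
      simp [leafMultiset, Multiset.singleton_add]
    rw [if_neg hl] at h
    by_cases hr : r = leaf i
    · rw [if_pos hr] at h
      obtain ⟨rfl, rfl⟩ : a = nodeLabel l ∧ T' = l := by simpa using h.symm
      subst hr
      simp only [leafMultiset]
      rw [← Multiset.singleton_add, add_comm]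
    rw [if_neg hr] at h
    rcases hdl : deleteLeaf i l with _ | ⟨a₁, l'⟩
    · rw [hdl] at h
      rcases hdr : deleteLeaf i r with _ | ⟨a₂, r'⟩
      · simp [hdr] at h
      · rw [hdr] at h
        obtain ⟨rfl, rfl⟩ : a = a₂ ∧ T' = node l r' := by simpa using h.symm
        have hh := ihr hdr
        simp only [leafMultiset]
        rw [← hh, ← Multiset.singleton_add, ← Multiset.singleton_add, add_left_comm]
    · rw [hdl] at h
      obtain ⟨rfl, rfl⟩ : a = a₁ ∧ T' = node l' r := by simpa using h.symm
      have hh := ihl hdl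
      simp only [leafMultiset]
      rw [← hh, Multiset.cons_add]

lemma deleteLeaf_minLeaf {i : ℕ} {T T' : BTree} {a : ℤ}
    (h : deleteLeaf i T = some (a, T')) (hi : i ≠ minLeaf T) : minLeaf T' = minLeaf T := by
  have hm := deleteLeaf_leafMultiset h
  apply le_antisymm
  · apply minLeaf_le
    have : minLeaf T ∈ i ::ₘ leafMultiset T' := by rw [hm]; exact minLeaf_mem T
    rcases Multiset.mem_cons.1 this with h' | h'
    · exact absurd h'.symm hi
    · exact h'
  · apply minLeaf_le
    rw [← hm]
    exact Multiset.mem_cons_of_mem (minLeaf_mem T')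

/-! ### TreeEquiv -/
lemma treeEquiv_refl : ∀ T : BTree, TreeEquiv T T := by
  intro T
  induction T with
  | leaf j => simp [TreeEquiv]
  | node l r ihl ihr => exact Or.inl ⟨ihl, ihr⟩

lemma treeEquiv_symm : ∀ {T U : BTree}, TreeEquiv T U → TreeEquiv U T := by
  intro T
  induction T with
  | leaf j => intro U h; cases U with
    | leaf k => exact (h : j = k).symm
    | node _ _ => exact absurd h (by simp [TreeEquiv])
  | node l r ihl ihr => intro U h; cases U with
    | leaf k => exact absurd h (by simp [TreeEquiv])
    | node l' r' =>
      rcases h with ⟨h1, h2⟩ | ⟨h1, h2⟩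
      · exact Or.inl ⟨ihl h1, ihr h2⟩
      · exact Or.inr ⟨ihr h2, ihl h1⟩

lemma treeEquiv_leaf_iff {i : ℕ} {U : BTree} : TreeEquiv (BTree.leaf i) U ↔ U = BTree.leaf i := by
  cases U with
  | leaf k => constructor
              · intro h; exact congrArg BTree.leaf (h : i = k).symm
              · intro h; cases h; exact treeEquiv_refl _
  | node _ _ => simp [TreeEquiv]

lemma treeEquiv_leafMultiset : ∀ {T U : BTree}, TreeEquiv T U →
    BTree.leafMultiset T = BTree.leafMultiset U := by
  intro T
  induction T with
  | leaf j => intro U h; cases U with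
    | leaf k => cases (h : j = k); rfl
    | node _ _ => exact absurd h (by simp [TreeEquiv])
  | node l r ihl ihr => intro U h; cases U with
    | leaf k => exact absurd h (by simp [TreeEquiv])
    | node l' r' =>
      rcases h with ⟨h1, h2⟩ | ⟨h1, h2⟩
      · simp [BTree.leafMultiset, ihl h1, ihr h2]
      · simp [BTree.leafMultiset, ihl h1, ihr h2, add_comm]

lemma treeEquiv_minLeaf {T U : BTree} (h : TreeEquiv T U) :
    BTree.minLeaf T = BTree.minLeaf U :=
  minLeaf_eq_of_leafMultiset_eq (treeEquiv_leafMultiset h)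

lemma treeEquiv_nodeLabel : ∀ {T U : BTree}, TreeEquiv T U →
    BTree.nodeLabel T = BTree.nodeLabel U := by
  intro T
  cases T with
  | leaf j => intro U h; rw [treeEquiv_leaf_iff.1 h]
  | node l r => intro U h; cases U with
    | leaf k => exact absurd h (by simp [TreeEquiv])
    | node l' r' =>
      simp only [BTree.nodeLabel, neg_inj]
      rcases h with ⟨h1, h2⟩ | ⟨h1, h2⟩
      · rw [treeEquiv_minLeaf h1, treeEquiv_minLeaf h2]
      · rw [treeEquiv_minLeaf h1, treeEquiv_minLeaf h2]
        rw [max_comm]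

/-! ### deleteLeaf respects TreeEquiv (on trees with no duplicate leaves) -/

lemma deleteLeaf_equiv {i : ℕ} : ∀ {T U : BTree}, TreeEquiv T U →
    (BTree.leafMultiset T).Nodup →
    (deleteLeaf i T = none ∧ deleteLeaf i U = none) ∨
    (∃ a T' U', deleteLeaf i T = some (a, T') ∧ deleteLeaf i U = some (a, U') ∧
      TreeEquiv T' U') := by
  intro T
  induction T with
  | leaf j =>
    intro U h _
    rw [treeEquiv_leaf_iff.1 h]
    exact Or.inl ⟨rfl, rfl⟩
  | node l r ihl ihr =>
    intro U h hnd
    cases U with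
    | leaf k => exact absurd h (by simp [TreeEquiv])
    | node l' r' =>
      have hndl : (BTree.leafMultiset l).Nodup := by
        have := hnd; rw [show BTree.leafMultiset (BTree.node l r) =
          BTree.leafMultiset l + BTree.leafMultiset r from rfl, Multiset.nodup_add] at this
        exact this.1
      have hndr : (BTree.leafMultiset r).Nodup := by
        have := hnd; rw [show BTree.leafMultiset (BTree.node l r) =
          BTree.leafMultiset l + BTree.leafMultiset r from rfl, Multiset.nodup_add] at this
        exact this.2.1
      have hdisj : ∀ {x : ℕ}, x ∈ BTree.leafMultiset l → x ∈ BTree.leafMultiset r → False := by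
        intro x hx hy
        refine Multiset.disjoint_left.1 ?_ hx hy
        have := hnd; rw [show BTree.leafMultiset (BTree.node l r) =
          BTree.leafMultiset l + BTree.leafMultiset r from rfl, Multiset.nodup_add] at this
        exact this.2.2
      rcases h with ⟨h1, h2⟩ | ⟨h1, h2⟩
      · -- straight case
        rw [deleteLeaf_node i l r, deleteLeaf_node i l' r']
        by_cases hl : l = BTree.leaf i
        · have hl' : l' = BTree.leaf i := treeEquiv_leaf_iff.1 (hl ▸ h1)
          rw [if_pos hl, if_pos hl']
          refine Or.inr ⟨nodeLabel r, r, r', rfl, ?_, h2⟩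
          rw [treeEquiv_nodeLabel h2]
        · have hl' : l' ≠ BTree.leaf i := fun hh =>
            hl (treeEquiv_leaf_iff.1 (treeEquiv_symm (hh ▸ h1)))
          rw [if_neg hl, if_neg hl']
          by_cases hr : r = BTree.leaf i
          · have hr' : r' = BTree.leaf i := treeEquiv_leaf_iff.1 (hr ▸ h2)
            rw [if_pos hr, if_pos hr']
            refine Or.inr ⟨nodeLabel l, l, l', rfl, ?_, h1⟩
            rw [treeEquiv_nodeLabel h1]
          · have hr' : r' ≠ BTree.leaf i := fun hh =>
              hr (treeEquiv_leaf_iff.1 (treeEquiv_symm (hh ▸ h2)))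
            rw [if_neg hr, if_neg hr']
            rcases ihl h1 hndl with ⟨e1, e2⟩ | ⟨a, l₁, l₁', e1, e2, he⟩
            · rw [e1, e2]
              rcases ihr h2 hndr with ⟨f1, f2⟩ | ⟨b, r₁, r₁', f1, f2, hf⟩
              · rw [f1, f2]; exact Or.inl ⟨rfl, rfl⟩
              · rw [f1, f2]
                exact Or.inr ⟨b, _, _, rfl, rfl, Or.inl ⟨h1, hf⟩⟩
            · rw [e1, e2]
              exact Or.inr ⟨a, _, _, rfl, rfl, Or.inl ⟨he, h2⟩⟩
      · -- swapped case : l ≡ r', r ≡ l'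
        rw [deleteLeaf_node i l r, deleteLeaf_node i l' r']
        by_cases hl : l = BTree.leaf i
        · have hr' : r' = BTree.leaf i := treeEquiv_leaf_iff.1 (hl ▸ h1)
          have hl' : l' ≠ BTree.leaf i := by
            intro hh
            have hr : r = BTree.leaf i := treeEquiv_leaf_iff.1 (treeEquiv_symm (hh ▸ h2))
            have : i ∈ BTree.leafMultiset l := by rw [hl]; simp [BTree.leafMultiset]
            have h2' : i ∈ BTree.leafMultiset r := by rw [hr]; simp [BTree.leafMultiset]
            exact hdisj this h2'
          rw [if_pos hl, if_neg hl', if_pos hr']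
          refine Or.inr ⟨nodeLabel r, r, l', rfl, ?_, h2⟩
          rw [treeEquiv_nodeLabel h2]
        · have hr' : r' ≠ BTree.leaf i := fun hh =>
            hl (treeEquiv_leaf_iff.1 (treeEquiv_symm (hh ▸ h1)))
          rw [if_neg hl]
          by_cases hr : r = BTree.leaf i
          · have hl' : l' = BTree.leaf i := treeEquiv_leaf_iff.1 (hr ▸ h2)
            rw [if_pos hr, if_pos hl']
            refine Or.inr ⟨nodeLabel l, l, r', rfl, ?_, h1⟩
            rw [treeEquiv_nodeLabel h1]
          · have hl' : l' ≠ BTree.leaf i := fun hh =>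
              hr (treeEquiv_leaf_iff.1 (treeEquiv_symm (hh ▸ h2)))
            rw [if_neg hr, if_neg hl', if_neg hr']
            have hml' : BTree.leafMultiset l' = BTree.leafMultiset r :=
              (treeEquiv_leafMultiset (treeEquiv_symm h2))
            have hmr' : BTree.leafMultiset r' = BTree.leafMultiset l :=
              (treeEquiv_leafMultiset (treeEquiv_symm h1))
            by_cases hil : i ∈ BTree.leafMultiset l
            · have hir : i ∉ BTree.leafMultiset r := fun hh => hdisj hil hh
              have e2 : deleteLeaf i l' = none := deleteLeaf_eq_none (by rw [hml']; exact hir)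
              rcases ihl h1 hndl with ⟨e1, _⟩ | ⟨a, l₁, r₁', e1, e2', he⟩
              · exact absurd e1 (by
                  obtain ⟨a, T', hh⟩ := deleteLeaf_isSome hil hl
                  rw [hh]; simp)
              · rw [e1, e2, e2']
                exact Or.inr ⟨a, _, _, rfl, rfl, Or.inr ⟨he, h2⟩⟩
            · have e1 : deleteLeaf i l = none := deleteLeaf_eq_none hil
              have e2 : deleteLeaf i r' = none := deleteLeaf_eq_none (by rw [hmr']; exact hil)
              rw [e1, e2]
              by_cases hir : i ∈ BTree.leafMultiset r
              · rcases ihr h2 hndr with ⟨f1, _⟩ | ⟨b, r₁, l₁', f1, f2, hf⟩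
                · exact absurd f1 (by
                    obtain ⟨a, T', hh⟩ := deleteLeaf_isSome hir hr
                    rw [hh]; simp)
                · rw [f1, f2]
                  exact Or.inr ⟨b, _, _, rfl, rfl, Or.inr ⟨h1, hf⟩⟩
              · have f1 : deleteLeaf i r = none := deleteLeaf_eq_none hir
                have f2 : deleteLeaf i l' = none := deleteLeaf_eq_none (by rw [hml']; exact hir)
                rw [f1, f2]
                exact Or.inl ⟨rfl, rfl⟩

lemma olaEncodeAux_equiv : ∀ (m : ℕ) {T U : BTree}, TreeEquiv T U →
    (BTree.leafMultiset T).Nodup → olaEncodeAux m T = olaEncodeAux m U := by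
  intro m
  induction m with
  | zero => intro T U _ _; rfl
  | succ m ih =>
    intro T U h hnd
    show (match deleteLeaf (m + 1) T with
      | some (a, T') => olaEncodeAux m T' ++ [a]
      | none => []) = (match deleteLeaf (m + 1) U with
      | some (a, U') => olaEncodeAux m U' ++ [a]
      | none => [])
    rcases deleteLeaf_equiv h hnd with ⟨e1, e2⟩ | ⟨a, T', U', e1, e2, he⟩
    · rw [e1, e2]
    · rw [e1, e2]
      have hnd' : (BTree.leafMultiset T').Nodup := by
        have := deleteLeaf_leafMultiset e1
        have h2 : (BTree.leafMultiset T') ≤ (m + 1) ::ₘ BTree.leafMultiset T' :=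
          Multiset.le_cons_self _ _
        rw [this] at h2
        exact Multiset.nodup_of_le h2 hnd
      simp only []
      rw [ih he hnd']

lemma olaEncodeAux_succ (m : ℕ) (T : BTree) :
    olaEncodeAux (m + 1) T = (match deleteLeaf (m + 1) T with
      | some (a, T') => olaEncodeAux m T' ++ [a]
      | none => []) := rfl

lemma range_succ' (m : ℕ) : Multiset.range (m + 1) = m ::ₘ Multiset.range m :=
  Multiset.range_succ m

lemma leafMultiset_erase_top {m : ℕ} {T T' : BTree} {a : ℤ}
    (hT : BTree.leafMultiset T = Multiset.range (m + 2))
    (h : deleteLeaf (m + 1) T = some (a, T')) :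
    BTree.leafMultiset T' = Multiset.range (m + 1) := by
  have hm := deleteLeaf_leafMultiset h
  rw [hT, range_succ'] at hm
  exact (Multiset.cons_inj_right _).1 hm

lemma olaEncodeAux_length : ∀ (m : ℕ) (T : BTree),
    BTree.leafMultiset T = Multiset.range (m + 1) → (olaEncodeAux m T).length = m := by
  intro m
  induction m with
  | zero => intro T _; rfl
  | succ m ih =>
    intro T hT
    have hmem : m + 1 ∈ BTree.leafMultiset T := by
      rw [hT]; exact Multiset.mem_range.2 (by omega)
    have hne : T ≠ BTree.leaf (m + 1) := by
      intro hh
      rw [hh] at hT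
      have : Multiset.card (BTree.leafMultiset (BTree.leaf (m+1))) = m + 2 := by
        rw [hT]; simp
      simp [BTree.leafMultiset] at this
    obtain ⟨a, T', hd⟩ := deleteLeaf_isSome hmem hne
    rw [olaEncodeAux_succ, hd]
    simp only [List.length_append, List.length_singleton]
    rw [ih T' (leafMultiset_erase_top hT hd)]

/-! ### Context lemmas -/

def ctxLeaves : Ctx → Multiset ℕ
  | Ctx.hole => 0
  | Ctx.left c r => ctxLeaves c + BTree.leafMultiset r
  | Ctx.right l c => BTree.leafMultiset l + ctxLeaves c

lemma leafMultiset_fill (c : Ctx) (X : BTree) :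
    BTree.leafMultiset (c.fill X) = ctxLeaves c + BTree.leafMultiset X := by
  induction c with
  | hole => simp [Ctx.fill, ctxLeaves]
  | left c r ih =>
    show BTree.leafMultiset (c.fill X) + BTree.leafMultiset r = _
    rw [ih, ctxLeaves]
    exact add_right_comm _ _ _
  | right l c ih =>
    show BTree.leafMultiset l + BTree.leafMultiset (c.fill X) = _
    rw [ih, ctxLeaves]
    exact (add_assoc _ _ _).symm

lemma fill_node_ne_leaf (c : Ctx) (x y : BTree) (i : ℕ) :
    c.fill (BTree.node x y) ≠ BTree.leaf i := by
  cases c <;> simp [Ctx.fill]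

lemma minLeaf_fill_congr {X Y : BTree} (h : BTree.minLeaf X = BTree.minLeaf Y) (c : Ctx) :
    BTree.minLeaf (c.fill X) = BTree.minLeaf (c.fill Y) := by
  induction c with
  | hole => exact h
  | left c r ih =>
    show min (BTree.minLeaf (c.fill X)) (BTree.minLeaf r) = _
    rw [ih]; rfl
  | right l c ih =>
    show min (BTree.minLeaf l) (BTree.minLeaf (c.fill X)) = _
    rw [ih]; rfl

lemma nodeLabel_fill_congr {X Y : BTree} (hm : BTree.minLeaf X = BTree.minLeaf Y)
    (hn : BTree.nodeLabel X = BTree.nodeLabel Y) (c : Ctx) :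
    BTree.nodeLabel (c.fill X) = BTree.nodeLabel (c.fill Y) := by
  cases c with
  | hole => exact hn
  | left c r =>
    show -(max (BTree.minLeaf (c.fill X)) (BTree.minLeaf r) : ℤ) = _
    rw [minLeaf_fill_congr hm]; rfl
  | right l c =>
    show -(max (BTree.minLeaf l) (BTree.minLeaf (c.fill X)) : ℤ) = _
    rw [minLeaf_fill_congr hm]; rfl

lemma fill_equiv_congr {X Y : BTree} (h : TreeEquiv X Y) (c : Ctx) :
    TreeEquiv (c.fill X) (c.fill Y) := by
  induction c with
  | hole => exact h
  | left c r ih => exact Or.inl ⟨ih, treeEquiv_refl r⟩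
  | right l c ih => exact Or.inl ⟨treeEquiv_refl l, ih⟩

/-- deleting a leaf that lives inside the plugged subtree -/
lemma deleteLeaf_fill_inner {i : ℕ} {x y X' : BTree} {a : ℤ} (c : Ctx)
    (hc : i ∉ ctxLeaves c)
    (h : deleteLeaf i (BTree.node x y) = some (a, X')) :
    deleteLeaf i (c.fill (BTree.node x y)) = some (a, c.fill X') := by
  induction c with
  | hole => exact h
  | left c r ih =>
    simp only [ctxLeaves, Multiset.mem_add, not_or] at hc
    show deleteLeaf i (BTree.node (c.fill (BTree.node x y)) r) = _
    rw [deleteLeaf_node, if_neg (fill_node_ne_leaf c x y i),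
      if_neg (ne_leaf_of_not_mem hc.2), ih hc.1]
    rfl
  | right l c ih =>
    simp only [ctxLeaves, Multiset.mem_add, not_or] at hc
    show deleteLeaf i (BTree.node l (c.fill (BTree.node x y))) = _
    rw [deleteLeaf_node, if_neg (ne_leaf_of_not_mem hc.1),
      if_neg (fill_node_ne_leaf c x y i), deleteLeaf_eq_none hc.1, ih hc.2]
    rfl

/-- deleting a leaf that lives in the context -/
lemma deleteLeaf_fill_ctx {i : ℕ} : ∀ (c : Ctx) {x y x' y' : BTree},
    i ∈ ctxLeaves c →
    i ∉ BTree.leafMultiset (BTree.node x y) →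
    BTree.leafMultiset (BTree.node x y) = BTree.leafMultiset (BTree.node x' y') →
    BTree.minLeaf (BTree.node x y) = BTree.minLeaf (BTree.node x' y') →
    BTree.nodeLabel (BTree.node x y) = BTree.nodeLabel (BTree.node x' y') →
    ∃ (lbl : ℤ) (c' : Ctx),
      deleteLeaf i (c.fill (BTree.node x y)) = some (lbl, Ctx.fill c' (BTree.node x y)) ∧
      deleteLeaf i (c.fill (BTree.node x' y')) = some (lbl, Ctx.fill c' (BTree.node x' y')) := by
  intro c
  induction c with
  | hole => intro x y x' y' hc _ _ _ _; simp [ctxLeaves] at hc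
  | left c r ih =>
    intro x y x' y' hc hX hmul hmin hlab
    have hX' : i ∉ BTree.leafMultiset (BTree.node x' y') := by rw [← hmul]; exact hX
    simp only [ctxLeaves, Multiset.mem_add] at hc
    simp only [Ctx.fill]
    rw [deleteLeaf_node, deleteLeaf_node, if_neg (fill_node_ne_leaf c x y i),
      if_neg (fill_node_ne_leaf c x' y' i)]
    by_cases hr : r = BTree.leaf i
    · rw [if_pos hr, if_pos hr]
      exact ⟨BTree.nodeLabel (c.fill (BTree.node x y)), c, rfl, by
        rw [nodeLabel_fill_congr hmin hlab c]⟩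
    rw [if_neg hr, if_neg hr]
    by_cases hcc : i ∈ ctxLeaves c
    · obtain ⟨lbl, c', h1, h2⟩ := ih hcc hX hmul hmin hlab
      refine ⟨lbl, Ctx.left c' r, ?_, ?_⟩
      · rw [h1]; rfl
      · rw [h2]; rfl
    · have h1 : deleteLeaf i (c.fill (BTree.node x y)) = none := by
        apply deleteLeaf_eq_none
        rw [leafMultiset_fill]
        simp only [Multiset.mem_add, not_or]
        exact ⟨hcc, hX⟩
      have h2 : deleteLeaf i (c.fill (BTree.node x' y')) = none := by
        apply deleteLeaf_eq_none
        rw [leafMultiset_fill]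
        simp only [Multiset.mem_add, not_or]
        exact ⟨hcc, hX'⟩
      have hir : i ∈ BTree.leafMultiset r := hc.resolve_left hcc
      obtain ⟨a, r', hd⟩ := deleteLeaf_isSome hir hr
      rw [h1, h2, hd]
      exact ⟨a, Ctx.left c r', rfl, rfl⟩
  | right l c ih =>
    intro x y x' y' hc hX hmul hmin hlab
    have hX' : i ∉ BTree.leafMultiset (BTree.node x' y') := by rw [← hmul]; exact hX
    simp only [ctxLeaves, Multiset.mem_add] at hc
    simp only [Ctx.fill]
    rw [deleteLeaf_node, deleteLeaf_node]
    by_cases hl : l = BTree.leaf i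
    · rw [if_pos hl, if_pos hl]
      exact ⟨BTree.nodeLabel (c.fill (BTree.node x y)), c, rfl, by
        rw [nodeLabel_fill_congr hmin hlab c]⟩
    rw [if_neg hl, if_neg hl, if_neg (fill_node_ne_leaf c x y i),
      if_neg (fill_node_ne_leaf c x' y' i)]
    by_cases hil : i ∈ BTree.leafMultiset l
    · obtain ⟨a, l', hd⟩ := deleteLeaf_isSome hil hl
      rw [hd]
      exact ⟨a, Ctx.right l' c, rfl, rfl⟩
    · rw [deleteLeaf_eq_none hil]
      have hcc : i ∈ ctxLeaves c := hc.resolve_left hil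
      obtain ⟨lbl, c', h1, h2⟩ := ih hcc hX hmul hmin hlab
      rw [h1, h2]
      exact ⟨lbl, Ctx.right l c', rfl, rfl⟩

/-! ### deleting a leaf inside one of the three region subtrees -/

lemma deleteLeaf_some_ne_leaf {i : ℕ} {X : BTree} {p : ℤ × BTree}
    (h : deleteLeaf i X = some p) : ∀ j, X ≠ BTree.leaf j := by
  intro j hh; rw [hh] at h; simp [deleteLeaf] at h

lemma region_delete_A {i : ℕ} {A B C A' : BTree} {α : ℤ}
    (hA : deleteLeaf i A = some (α, A'))
    (hB : i ∉ BTree.leafMultiset B) (hC : i ∉ BTree.leafMultiset C) :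
    deleteLeaf i (BTree.node (BTree.node A B) C) = some (α, BTree.node (BTree.node A' B) C) ∧
    deleteLeaf i (BTree.node (BTree.node A C) B) = some (α, BTree.node (BTree.node A' C) B) := by
  have hBne := ne_leaf_of_not_mem hB
  have hCne := ne_leaf_of_not_mem hC
  have hAne := deleteLeaf_some_ne_leaf hA i
  constructor
  · rw [deleteLeaf_node, if_neg (by simp), if_neg hCne,
      deleteLeaf_node, if_neg hAne, if_neg hBne, hA]
  · rw [deleteLeaf_node, if_neg (by simp), if_neg hBne,
      deleteLeaf_node, if_neg hAne, if_neg hCne, hA]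

lemma region_delete_B {i : ℕ} {A B C B' : BTree} {β : ℤ}
    (hB : deleteLeaf i B = some (β, B'))
    (hA : i ∉ BTree.leafMultiset A) (hC : i ∉ BTree.leafMultiset C) :
    deleteLeaf i (BTree.node (BTree.node A B) C) = some (β, BTree.node (BTree.node A B') C) ∧
    deleteLeaf i (BTree.node (BTree.node A C) B) = some (β, BTree.node (BTree.node A C) B') := by
  have hAne := ne_leaf_of_not_mem hA
  have hCne := ne_leaf_of_not_mem hC
  have hBne := deleteLeaf_some_ne_leaf hB i
  constructor
  · rw [deleteLeaf_node, if_neg (by simp), if_neg hCne,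
      deleteLeaf_node, if_neg hAne, if_neg hBne, deleteLeaf_eq_none hA, hB]
  · rw [deleteLeaf_node, if_neg (by simp), if_neg hBne,
      deleteLeaf_node, if_neg hAne, if_neg hCne, deleteLeaf_eq_none hA,
      deleteLeaf_eq_none hC, hB]

lemma region_delete_C {i : ℕ} {A B C C' : BTree} {γ : ℤ}
    (hC : deleteLeaf i C = some (γ, C'))
    (hA : i ∉ BTree.leafMultiset A) (hB : i ∉ BTree.leafMultiset B) :
    deleteLeaf i (BTree.node (BTree.node A B) C) = some (γ, BTree.node (BTree.node A B) C') ∧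
    deleteLeaf i (BTree.node (BTree.node A C) B) = some (γ, BTree.node (BTree.node A C') B) := by
  have hAne := ne_leaf_of_not_mem hA
  have hBne := ne_leaf_of_not_mem hB
  have hCne := deleteLeaf_some_ne_leaf hC i
  constructor
  · rw [deleteLeaf_node, if_neg (by simp), if_neg hCne,
      deleteLeaf_node, if_neg hAne, if_neg hBne, deleteLeaf_eq_none hA,
      deleteLeaf_eq_none hB, hC]
  · rw [deleteLeaf_node, if_neg (by simp), if_neg hBne,
      deleteLeaf_node, if_neg hAne, if_neg hCne, deleteLeaf_eq_none hA, hC]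

/-- base-case region deletion: `A = leaf a` -/
lemma region_delete_base {a : ℕ} {B C : BTree}
    (hB : a ∉ BTree.leafMultiset B) (hC : a ∉ BTree.leafMultiset C) :
    deleteLeaf a (BTree.node (BTree.node (BTree.leaf a) B) C)
      = some (BTree.nodeLabel B, BTree.node B C) ∧
    deleteLeaf a (BTree.node (BTree.node (BTree.leaf a) C) B)
      = some (BTree.nodeLabel C, BTree.node C B) := by
  have hBne := ne_leaf_of_not_mem hB
  have hCne := ne_leaf_of_not_mem hC
  constructor
  · rw [deleteLeaf_node, if_neg (by simp), if_neg hCne, deleteLeaf_node, if_pos rfl]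
  · rw [deleteLeaf_node, if_neg (by simp), if_neg hBne, deleteLeaf_node, if_pos rfl]

/-- counting helper -/
lemma count_region_le_one {c : Ctx} {A B C : BTree} {n : ℕ}
    (h : BTree.leafMultiset (Ctx.fill c (BTree.node (BTree.node A B) C)) = Multiset.range n)
    (w : ℕ) :
    Multiset.count w (ctxLeaves c) + (Multiset.count w (BTree.leafMultiset A) +
      Multiset.count w (BTree.leafMultiset B) + Multiset.count w (BTree.leafMultiset C)) ≤ 1 := by
  have h1 : Multiset.count w (Multiset.range n) ≤ 1 :=
    Multiset.nodup_iff_count_le_one.1 (Multiset.nodup_range n) w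
  rw [← h, leafMultiset_fill] at h1
  show _ ≤ 1
  rw [show BTree.leafMultiset (BTree.node (BTree.node A B) C) =
    (BTree.leafMultiset A + BTree.leafMultiset B) + BTree.leafMultiset C from rfl] at h1
  simp only [Multiset.count_add] at h1
  omega

lemma mem_region_total {c : Ctx} {A B C : BTree} {n : ℕ}
    (h : BTree.leafMultiset (Ctx.fill c (BTree.node (BTree.node A B) C)) = Multiset.range n)
    {w : ℕ} (hw : w < n) :
    w ∈ ctxLeaves c ∨ w ∈ BTree.leafMultiset A ∨ w ∈ BTree.leafMultiset B ∨
      w ∈ BTree.leafMultiset C := by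
  have h1 : w ∈ BTree.leafMultiset (Ctx.fill c (BTree.node (BTree.node A B) C)) := by
    rw [h]; exact Multiset.mem_range.2 hw
  rw [leafMultiset_fill] at h1
  rw [show BTree.leafMultiset (BTree.node (BTree.node A B) C) =
    (BTree.leafMultiset A + BTree.leafMultiset B) + BTree.leafMultiset C from rfl] at h1
  simp only [Multiset.mem_add] at h1
  tauto

lemma one_le_numLeaves (T : BTree) : 1 ≤ BTree.numLeaves T := by
  induction T with
  | leaf j => exact le_refl 1
  | node l r ihl ihr => show 1 ≤ BTree.numLeaves l + BTree.numLeaves r; omega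

lemma region_multiset_rfl (A B C : BTree) :
    BTree.leafMultiset (BTree.node (BTree.node A B) C) =
      (BTree.leafMultiset A + BTree.leafMultiset B) + BTree.leafMultiset C := rfl

lemma main : ∀ (d : ℕ) (c : Ctx) (A B C : BTree),
    BTree.minLeaf B < BTree.minLeaf A →
    BTree.minLeaf C < BTree.minLeaf A →
    BTree.leafMultiset (Ctx.fill c (BTree.node (BTree.node A B) C))
      = Multiset.range (BTree.minLeaf A + d + 1) →
    ∃ (L M : List ℤ) (x y : ℤ), x ≠ y ∧
      L.length = BTree.minLeaf A - 1 ∧ M.length = d ∧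
      olaEncodeAux (BTree.minLeaf A + d) (Ctx.fill c (BTree.node (BTree.node A B) C))
        = L ++ x :: M ∧
      olaEncodeAux (BTree.minLeaf A + d) (Ctx.fill c (BTree.node (BTree.node A C) B))
        = L ++ y :: M := by
  intro d
  induction d with
  | zero =>
    intro c A B C hb hc htot
    -- counting facts at the value `minLeaf A`
    have hcnt := count_region_le_one htot (BTree.minLeaf A)
    have hcA : 1 ≤ Multiset.count (BTree.minLeaf A) (BTree.leafMultiset A) :=
      Multiset.one_le_count_iff_mem.2 (minLeaf_mem A)
    have hBnot : BTree.minLeaf A ∉ BTree.leafMultiset B := by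
      intro hm; have := Multiset.one_le_count_iff_mem.2 hm; omega
    have hCnot : BTree.minLeaf A ∉ BTree.leafMultiset C := by
      intro hm; have := Multiset.one_le_count_iff_mem.2 hm; omega
    have hctxnot : BTree.minLeaf A ∉ ctxLeaves c := by
      intro hm; have := Multiset.one_le_count_iff_mem.2 hm; omega
    -- A is the single leaf `minLeaf A`
    have hall : ∀ x ∈ BTree.leafMultiset A, x = BTree.minLeaf A := by
      intro x hx
      have h1 : BTree.minLeaf A ≤ x := minLeaf_le A hx
      have hx' : x ∈ BTree.leafMultiset (Ctx.fill c (BTree.node (BTree.node A B) C)) := by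
        rw [leafMultiset_fill, region_multiset_rfl]
        simp only [Multiset.mem_add]
        tauto
      rw [htot] at hx'
      have := Multiset.mem_range.1 hx'
      omega
    have hcard : Multiset.card (BTree.leafMultiset A) = 1 := by
      have hrep : BTree.leafMultiset A =
          Multiset.replicate (Multiset.card (BTree.leafMultiset A)) (BTree.minLeaf A) :=
        Multiset.eq_replicate_card.2 hall
      have hcc : Multiset.count (BTree.minLeaf A) (BTree.leafMultiset A)
          = Multiset.card (BTree.leafMultiset A) := by
        conv_lhs => rw [hrep]
        simp [Multiset.count_replicate]
      have hpos : 0 < Multiset.card (BTree.leafMultiset A) :=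
        Multiset.card_pos.2 (leafMultiset_ne_zero A)
      omega
    have hAleaf : ∃ aa, A = BTree.leaf aa := by
      cases A with
      | leaf j => exact ⟨j, rfl⟩
      | node l r =>
        exfalso
        rw [card_leafMultiset] at hcard
        have h1 := one_le_numLeaves l
        have h2 := one_le_numLeaves r
        show False
        have : BTree.numLeaves (BTree.node l r) = BTree.numLeaves l + BTree.numLeaves r := rfl
        omega
    obtain ⟨aa, rfl⟩ := hAleaf
    have haa : BTree.minLeaf (BTree.leaf aa) = aa := rfl
    rw [haa] at hb hc hBnot hCnot hctxnot htot ⊢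
    obtain ⟨a', rfl⟩ : ∃ a', aa = a' + 1 := ⟨aa - 1, by omega⟩
    obtain ⟨hreg1, hreg2⟩ := region_delete_base hBnot hCnot
    have hdel1 := deleteLeaf_fill_inner c hctxnot hreg1
    have hdel2 := deleteLeaf_fill_inner c hctxnot hreg2
    -- leftover multiset
    have htot' : BTree.leafMultiset (Ctx.fill c (BTree.node B C)) = Multiset.range (a' + 1) := by
      have hm := deleteLeaf_leafMultiset hdel1
      rw [htot] at hm
      rw [show a' + 1 + 0 + 1 = a' + 2 from rfl, range_succ'] at hm
      exact (Multiset.cons_inj_right _).1 hm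
    have hnodup' : (BTree.leafMultiset (Ctx.fill c (BTree.node C B))).Nodup := by
      have hequiv : TreeEquiv (Ctx.fill c (BTree.node C B)) (Ctx.fill c (BTree.node B C)) :=
        fill_equiv_congr (show TreeEquiv (BTree.node C B) (BTree.node B C) from
          Or.inr ⟨treeEquiv_refl C, treeEquiv_refl B⟩) c
      rw [treeEquiv_leafMultiset hequiv, htot']
      exact Multiset.nodup_range _
    have hpre : olaEncodeAux a' (Ctx.fill c (BTree.node C B))
        = olaEncodeAux a' (Ctx.fill c (BTree.node B C)) :=
      olaEncodeAux_equiv a'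
        (fill_equiv_congr (show TreeEquiv (BTree.node C B) (BTree.node B C) from
          Or.inr ⟨treeEquiv_refl C, treeEquiv_refl B⟩) c) hnodup'
    refine ⟨olaEncodeAux a' (Ctx.fill c (BTree.node B C)), [],
      BTree.nodeLabel B, BTree.nodeLabel C, ?_, ?_, rfl, ?_, ?_⟩
    · -- nodeLabel B ≠ nodeLabel C
      intro heq
      have hwB := natAbs_nodeLabel_mem B
      have hwC := natAbs_nodeLabel_mem C
      rw [heq] at hwB
      have hcnt2 := count_region_le_one htot (BTree.nodeLabel C).natAbs
      have h1 := Multiset.one_le_count_iff_mem.2 hwB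
      have h2 := Multiset.one_le_count_iff_mem.2 hwC
      omega
    · rw [olaEncodeAux_length a' _ htot']
      omega
    · rw [show a' + 1 + 0 = a' + 1 from rfl, olaEncodeAux_succ, hdel1]
    · rw [show a' + 1 + 0 = a' + 1 from rfl, olaEncodeAux_succ, hdel2]
      simp only []
      rw [hpre]
  | succ d ih =>
    intro c A B C hb hc htot
    have hiA : BTree.minLeaf A ≤ BTree.minLeaf A + d + 1 := by omega
    have hmem := mem_region_total htot
      (show BTree.minLeaf A + d + 1 < BTree.minLeaf A + (d + 1) + 1 by omega)
    have hcnt := count_region_le_one htot (BTree.minLeaf A + d + 1)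
    rcases hmem with hctx | hA | hB | hC
    · -- the deleted leaf is in the context
      have h1c := Multiset.one_le_count_iff_mem.2 hctx
      have hAnot : BTree.minLeaf A + d + 1 ∉ BTree.leafMultiset A := by
        intro hm; have := Multiset.one_le_count_iff_mem.2 hm; omega
      have hBnot : BTree.minLeaf A + d + 1 ∉ BTree.leafMultiset B := by
        intro hm; have := Multiset.one_le_count_iff_mem.2 hm; omega
      have hCnot : BTree.minLeaf A + d + 1 ∉ BTree.leafMultiset C := by
        intro hm; have := Multiset.one_le_count_iff_mem.2 hm; omega
      have hnotreg : BTree.minLeaf A + d + 1 ∉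
          BTree.leafMultiset (BTree.node (BTree.node A B) C) := by
        rw [region_multiset_rfl]
        simp only [Multiset.mem_add]
        tauto
      have hmul : BTree.leafMultiset (BTree.node (BTree.node A B) C)
          = BTree.leafMultiset (BTree.node (BTree.node A C) B) := by
        rw [region_multiset_rfl, region_multiset_rfl]
        exact add_right_comm _ _ _
      have hmin := minLeaf_eq_of_leafMultiset_eq hmul
      have hlab : BTree.nodeLabel (BTree.node (BTree.node A B) C)
          = BTree.nodeLabel (BTree.node (BTree.node A C) B) := by
        have hmax : max (min (BTree.minLeaf A) (BTree.minLeaf B)) (BTree.minLeaf C)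
            = max (min (BTree.minLeaf A) (BTree.minLeaf C)) (BTree.minLeaf B) := by omega
        simp only [BTree.nodeLabel, BTree.minLeaf]
        rw [← Nat.cast_max, ← Nat.cast_max, hmax]
      obtain ⟨lbl, c', h1, h2⟩ := deleteLeaf_fill_ctx c hctx hnotreg hmul hmin hlab
      have htot' : BTree.leafMultiset (Ctx.fill c' (BTree.node (BTree.node A B) C))
          = Multiset.range (BTree.minLeaf A + d + 1) := by
        have hm := deleteLeaf_leafMultiset h1
        rw [htot] at hm
        rw [show BTree.minLeaf A + (d + 1) + 1 = (BTree.minLeaf A + d + 1) + 1 from rfl,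
          range_succ'] at hm
        exact (Multiset.cons_inj_right _).1 hm
      obtain ⟨L, M, x, y, hxy, hL, hM, henc1, henc2⟩ := ih c' A B C hb hc htot'
      refine ⟨L, M ++ [lbl], x, y, hxy, hL, by simp [hM], ?_, ?_⟩
      · rw [show BTree.minLeaf A + (d + 1) = (BTree.minLeaf A + d) + 1 from rfl,
          olaEncodeAux_succ, h1]
        simp only []
        rw [henc1]
        simp
      · rw [show BTree.minLeaf A + (d + 1) = (BTree.minLeaf A + d) + 1 from rfl,
          olaEncodeAux_succ, h2]
        simp only []
        rw [henc2]
        simp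
    · -- the deleted leaf is in A
      have h1c := Multiset.one_le_count_iff_mem.2 hA
      have hBnot : BTree.minLeaf A + d + 1 ∉ BTree.leafMultiset B := by
        intro hm; have := Multiset.one_le_count_iff_mem.2 hm; omega
      have hCnot : BTree.minLeaf A + d + 1 ∉ BTree.leafMultiset C := by
        intro hm; have := Multiset.one_le_count_iff_mem.2 hm; omega
      have hctxnot : BTree.minLeaf A + d + 1 ∉ ctxLeaves c := by
        intro hm; have := Multiset.one_le_count_iff_mem.2 hm; omega
      have hAne : A ≠ BTree.leaf (BTree.minLeaf A + d + 1) := by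
        intro hh
        have := congrArg BTree.minLeaf hh
        rw [show BTree.minLeaf (BTree.leaf (BTree.minLeaf A + d + 1))
          = BTree.minLeaf A + d + 1 from rfl] at this
        omega
      obtain ⟨α, A', hdA⟩ := deleteLeaf_isSome hA hAne
      have hminA' : BTree.minLeaf A' = BTree.minLeaf A :=
        deleteLeaf_minLeaf hdA (by omega)
      obtain ⟨hreg1, hreg2⟩ := region_delete_A hdA hBnot hCnot
      have hdel1 := deleteLeaf_fill_inner c hctxnot hreg1
      have hdel2 := deleteLeaf_fill_inner c hctxnot hreg2
      have htot' : BTree.leafMultiset (Ctx.fill c (BTree.node (BTree.node A' B) C))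
          = Multiset.range (BTree.minLeaf A' + d + 1) := by
        have hm := deleteLeaf_leafMultiset hdel1
        rw [htot] at hm
        rw [show BTree.minLeaf A + (d + 1) + 1 = (BTree.minLeaf A + d + 1) + 1 from rfl,
          range_succ'] at hm
        rw [hminA']
        exact (Multiset.cons_inj_right _).1 hm
      obtain ⟨L, M, x, y, hxy, hL, hM, henc1, henc2⟩ := ih c A' B C
        (by rw [hminA']; exact hb) (by rw [hminA']; exact hc) htot'
      rw [hminA'] at henc1 henc2 hL
      refine ⟨L, M ++ [α], x, y, hxy, hL, by simp [hM], ?_, ?_⟩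
      · rw [show BTree.minLeaf A + (d + 1) = (BTree.minLeaf A + d) + 1 from rfl,
          olaEncodeAux_succ, hdel1]
        simp only []
        rw [henc1]
        simp
      · rw [show BTree.minLeaf A + (d + 1) = (BTree.minLeaf A + d) + 1 from rfl,
          olaEncodeAux_succ, hdel2]
        simp only []
        rw [henc2]
        simp
    · -- the deleted leaf is in B
      have h1c := Multiset.one_le_count_iff_mem.2 hB
      have hAnot : BTree.minLeaf A + d + 1 ∉ BTree.leafMultiset A := by
        intro hm; have := Multiset.one_le_count_iff_mem.2 hm; omega
      have hCnot : BTree.minLeaf A + d + 1 ∉ BTree.leafMultiset C := by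
        intro hm; have := Multiset.one_le_count_iff_mem.2 hm; omega
      have hctxnot : BTree.minLeaf A + d + 1 ∉ ctxLeaves c := by
        intro hm; have := Multiset.one_le_count_iff_mem.2 hm; omega
      have hBne : B ≠ BTree.leaf (BTree.minLeaf A + d + 1) := by
        intro hh
        have := congrArg BTree.minLeaf hh
        rw [show BTree.minLeaf (BTree.leaf (BTree.minLeaf A + d + 1))
          = BTree.minLeaf A + d + 1 from rfl] at this
        omega
      obtain ⟨β, B', hdB⟩ := deleteLeaf_isSome hB hBne
      have hminB' : BTree.minLeaf B' = BTree.minLeaf B :=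
        deleteLeaf_minLeaf hdB (by omega)
      obtain ⟨hreg1, hreg2⟩ := region_delete_B hdB hAnot hCnot
      have hdel1 := deleteLeaf_fill_inner c hctxnot hreg1
      have hdel2 := deleteLeaf_fill_inner c hctxnot hreg2
      have htot' : BTree.leafMultiset (Ctx.fill c (BTree.node (BTree.node A B') C))
          = Multiset.range (BTree.minLeaf A + d + 1) := by
        have hm := deleteLeaf_leafMultiset hdel1
        rw [htot] at hm
        rw [show BTree.minLeaf A + (d + 1) + 1 = (BTree.minLeaf A + d + 1) + 1 from rfl,
          range_succ'] at hm
        exact (Multiset.cons_inj_right _).1 hm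
      obtain ⟨L, M, x, y, hxy, hL, hM, henc1, henc2⟩ := ih c A B' C
        (by rw [hminB']; exact hb) hc htot'
      refine ⟨L, M ++ [β], x, y, hxy, hL, by simp [hM], ?_, ?_⟩
      · rw [show BTree.minLeaf A + (d + 1) = (BTree.minLeaf A + d) + 1 from rfl,
          olaEncodeAux_succ, hdel1]
        simp only []
        rw [henc1]
        simp
      · rw [show BTree.minLeaf A + (d + 1) = (BTree.minLeaf A + d) + 1 from rfl,
          olaEncodeAux_succ, hdel2]
        simp only []
        rw [henc2]
        simp
    · -- the deleted leaf is in C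
      have h1c := Multiset.one_le_count_iff_mem.2 hC
      have hAnot : BTree.minLeaf A + d + 1 ∉ BTree.leafMultiset A := by
        intro hm; have := Multiset.one_le_count_iff_mem.2 hm; omega
      have hBnot : BTree.minLeaf A + d + 1 ∉ BTree.leafMultiset B := by
        intro hm; have := Multiset.one_le_count_iff_mem.2 hm; omega
      have hctxnot : BTree.minLeaf A + d + 1 ∉ ctxLeaves c := by
        intro hm; have := Multiset.one_le_count_iff_mem.2 hm; omega
      have hCne : C ≠ BTree.leaf (BTree.minLeaf A + d + 1) := by
        intro hh
        have := congrArg BTree.minLeaf hh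
        rw [show BTree.minLeaf (BTree.leaf (BTree.minLeaf A + d + 1))
          = BTree.minLeaf A + d + 1 from rfl] at this
        omega
      obtain ⟨γ, C', hdC⟩ := deleteLeaf_isSome hC hCne
      have hminC' : BTree.minLeaf C' = BTree.minLeaf C :=
        deleteLeaf_minLeaf hdC (by omega)
      obtain ⟨hreg1, hreg2⟩ := region_delete_C hdC hAnot hBnot
      have hdel1 := deleteLeaf_fill_inner c hctxnot hreg1
      have hdel2 := deleteLeaf_fill_inner c hctxnot hreg2
      have htot' : BTree.leafMultiset (Ctx.fill c (BTree.node (BTree.node A B) C'))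
          = Multiset.range (BTree.minLeaf A + d + 1) := by
        have hm := deleteLeaf_leafMultiset hdel1
        rw [htot] at hm
        rw [show BTree.minLeaf A + (d + 1) + 1 = (BTree.minLeaf A + d + 1) + 1 from rfl,
          range_succ'] at hm
        exact (Multiset.cons_inj_right _).1 hm
      obtain ⟨L, M, x, y, hxy, hL, hM, henc1, henc2⟩ := ih c A B C'
        hb (by rw [hminC']; exact hc) htot'
      refine ⟨L, M ++ [γ], x, y, hxy, hL, by simp [hM], ?_, ?_⟩
      · rw [show BTree.minLeaf A + (d + 1) = (BTree.minLeaf A + d) + 1 from rfl,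
          olaEncodeAux_succ, hdel1]
        simp only []
        rw [henc1]
        simp
      · rw [show BTree.minLeaf A + (d + 1) = (BTree.minLeaf A + d) + 1 from rfl,
          olaEncodeAux_succ, hdel2]
        simp only []
        rw [henc2]
        simp

lemma countP_zip_self (L : List ℤ) :
    (L.zip L).countP (fun p => decide (p.1 ≠ p.2)) = 0 := by
  induction L with
  | nil => rfl
  | cons a L ih => simpa using ih

end OLAProof
/-- Let `T` be a leaf-ordered rooted binary tree on `n` leaves and
let `e` be the internal edge between the node `(A,B)` (lower endpoint, canonical
label `-j`) and the node `((A,B),C)` (upper endpoint, canonical label `-k`), sitting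
in a context `c`.  If `T'` is obtained from `T` by the NNI move across `e` turning
`((A,B),C)` into `((A,C),B)` and in `T'` the modified edge still has the node with
canonical label `-k` as its upper endpoint, then the OLA encodings of `T` and `T'`
differ only in the entry `a_j`; in particular `d_OLA(T, T') = 1`. -/
theorem nni_same_upper_label_dist_one (n j k : ℕ) (T T' : BTree)
    (hT : BTree.IsRBT n T) (hT' : BTree.IsRBT n T')
    (c : Ctx) (A B C : BTree)
    (hfill : TreeEquiv T (Ctx.fill c (BTree.node (BTree.node A B) C)))
    (hfill' : TreeEquiv T' (Ctx.fill c (BTree.node (BTree.node A C) B)))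
    (hupper : BTree.nodeLabel (BTree.node (BTree.node A B) C) = -(k : ℤ))
    (hlower : BTree.nodeLabel (BTree.node A B) = -(j : ℤ))
    (hupper' : BTree.nodeLabel (BTree.node (BTree.node A C) B) = -(k : ℤ)) :
    (∀ i : ℕ, i + 1 ≠ j → (BTree.olaEncode T)[i]? = (BTree.olaEncode T')[i]?) ∧
    olaDist T T' = 1 := by
  classical
  obtain ⟨-, hTm⟩ := hT
  obtain ⟨-, hT'm⟩ := hT'
  have hUm : BTree.leafMultiset (Ctx.fill c (BTree.node (BTree.node A B) C))
      = Multiset.range n := (OLAProof.treeEquiv_leafMultiset hfill).symm.trans hTm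
  have hU'm : BTree.leafMultiset (Ctx.fill c (BTree.node (BTree.node A C) B))
      = Multiset.range n := (OLAProof.treeEquiv_leafMultiset hfill').symm.trans hT'm
  -- distinctness of the three minima
  have hcntA := OLAProof.count_region_le_one hUm (BTree.minLeaf A)
  have hcntB := OLAProof.count_region_le_one hUm (BTree.minLeaf B)
  have hcntC := OLAProof.count_region_le_one hUm (BTree.minLeaf C)
  have hmemA := Multiset.one_le_count_iff_mem.2 (OLAProof.minLeaf_mem A)
  have hmemB := Multiset.one_le_count_iff_mem.2 (OLAProof.minLeaf_mem B)
  have hmemC := Multiset.one_le_count_iff_mem.2 (OLAProof.minLeaf_mem C)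
  have hab : BTree.minLeaf A ≠ BTree.minLeaf B := by
    intro h; rw [← h] at hmemB; omega
  have hac : BTree.minLeaf A ≠ BTree.minLeaf C := by
    intro h; rw [← h] at hmemC; omega
  have hbc : BTree.minLeaf B ≠ BTree.minLeaf C := by
    intro h; rw [← h] at hmemC; omega
  -- nat versions of the label hypotheses
  have e1 : max (min (BTree.minLeaf A) (BTree.minLeaf B)) (BTree.minLeaf C) = k := by
    simp only [BTree.nodeLabel, BTree.minLeaf] at hupper
    rw [← Nat.cast_max] at hupper
    exact_mod_cast neg_inj.1 hupper
  have e2 : max (min (BTree.minLeaf A) (BTree.minLeaf C)) (BTree.minLeaf B) = k := by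
    simp only [BTree.nodeLabel, BTree.minLeaf] at hupper'
    rw [← Nat.cast_max] at hupper'
    exact_mod_cast neg_inj.1 hupper'
  have e0 : max (BTree.minLeaf A) (BTree.minLeaf B) = j := by
    simp only [BTree.nodeLabel] at hlower
    rw [← Nat.cast_max] at hlower
    exact_mod_cast neg_inj.1 hlower
  have hb : BTree.minLeaf B < BTree.minLeaf A := by omega
  have hc : BTree.minLeaf C < BTree.minLeaf A := by omega
  have hj : j = BTree.minLeaf A := by omega
  -- n = minLeaf A + d + 1
  have han : BTree.minLeaf A < n := by
    have : BTree.minLeaf A ∈ Multiset.range n := by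
      rw [← hUm, OLAProof.leafMultiset_fill, OLAProof.region_multiset_rfl]
      simp only [Multiset.mem_add]
      exact Or.inr (Or.inl (Or.inl (OLAProof.minLeaf_mem A)))
    exact Multiset.mem_range.1 this
  obtain ⟨d, hd⟩ : ∃ d, n = BTree.minLeaf A + d + 1 :=
    ⟨n - BTree.minLeaf A - 1, by omega⟩
  obtain ⟨L, M, x, y, hxy, hL, hM, henc1, henc2⟩ :=
    OLAProof.main d c A B C hb hc (by rw [hUm, hd])
  -- identify the encodings
  have hnum : BTree.numLeaves T = n := by
    rw [← OLAProof.card_leafMultiset, hTm, Multiset.card_range]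
  have hnum' : BTree.numLeaves T' = n := by
    rw [← OLAProof.card_leafMultiset, hT'm, Multiset.card_range]
  have hTnodup : (BTree.leafMultiset T).Nodup := by
    rw [hTm]; exact Multiset.nodup_range n
  have hT'nodup : (BTree.leafMultiset T').Nodup := by
    rw [hT'm]; exact Multiset.nodup_range n
  have hencT : BTree.olaEncode T = L ++ x :: M := by
    show BTree.olaEncodeAux (BTree.numLeaves T - 1) T = L ++ x :: M
    rw [hnum, show n - 1 = BTree.minLeaf A + d by omega,
      OLAProof.olaEncodeAux_equiv (BTree.minLeaf A + d) hfill hTnodup, henc1]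
  have hencT' : BTree.olaEncode T' = L ++ y :: M := by
    show BTree.olaEncodeAux (BTree.numLeaves T' - 1) T' = L ++ y :: M
    rw [hnum', show n - 1 = BTree.minLeaf A + d by omega,
      OLAProof.olaEncodeAux_equiv (BTree.minLeaf A + d) hfill' hT'nodup, henc2]
  constructor
  · intro i hi
    rw [hencT, hencT']
    rcases lt_trichotomy i L.length with h | h | h
    · rw [List.getElem?_append_left h, List.getElem?_append_left h]
    · exfalso; apply hi; omega
    · rw [List.getElem?_append_right (by omega), List.getElem?_append_right (by omega)]
      have hkey : i - L.length = (i - L.length - 1) + 1 := by omega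
      rw [hkey, List.getElem?_cons_succ, List.getElem?_cons_succ]
  · show ((BTree.olaEncode T).zip (BTree.olaEncode T')).countP
      (fun p => decide (p.1 ≠ p.2)) = 1
    rw [hencT, hencT', List.zip_append (by rfl)]
    rw [List.countP_append]
    rw [OLAProof.countP_zip_self L]
    show 0 + ((((x, y) :: (M.zip M))).countP fun p => decide (p.1 ≠ p.2)) = 1
    rw [List.countP_cons]
    rw [OLAProof.countP_zip_self M]
    simp [hxy]
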